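/- Let h : 𝒯 → 𝒜 be a homology theory that reflects isomorphisms and is full. Let X →γ Z →ω V →ν X[1] be a distinguished triangle in 𝒯, and suppose the morphism h(ν) : h(V) → h(X)[1] admits a section in 𝒜 (i.e., there is μ̂ : h(X)[1] → h(V) with h(ν) ∘ μ̂ = id). Then there exists a morphism μ : X[1] → V in 𝒯 such that the morphism Z ⊕ X[1] → V with components ω and μ is an isomorphism; in particular γ = 0. -/

import Mathlib

open CategoryTheory Category Limits Pretriangulated

/-- Let `h` be a homology theory that reflects isomorphisms and is full.
Given a distinguished triangle `X ⟶ Z ⟶ V ⟶ X⟦1⟧` such that `h(ν) : h(V) ⟶ h(X)⟦1⟧`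
admits a section in `𝒜`, there is `μ : X⟦1⟧ ⟶ V` such that `(ω, μ) : Z ⊞ X⟦1⟧ ⟶ V`
is an isomorphism; in particular `γ = 0`. -/
theorem section_gives_splitting
    {T : Type*} [Category T] [HasZeroObject T] [Preadditive T] [HasShift T ℤ]
    [∀ n : ℤ, (shiftFunctor T n).Additive] [Pretriangulated T]
    {A : Type*} [Category A] [Abelian A] [HasShift A ℤ]
    [∀ n : ℤ, (shiftFunctor A n).Additive]
    (h : T ⥤ A) [h.Additive] [h.CommShift ℤ] [h.IsHomological]
    [h.ReflectsIsomorphisms] [h.Full]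
    {X Z V : T} (γ : X ⟶ Z) (ω : Z ⟶ V) (ν : V ⟶ X⟦(1:ℤ)⟧)
    (hT : Triangle.mk γ ω ν ∈ distTriang T)
    (μhat : (h.obj X)⟦(1:ℤ)⟧ ⟶ h.obj V)
    (hμ : μhat ≫ (h.map ν ≫ (h.commShiftIso (1:ℤ)).hom.app X) = 𝟙 ((h.obj X)⟦(1:ℤ)⟧)) :
    (∃ μ : X⟦(1:ℤ)⟧ ⟶ V, IsIso (biprod.desc ω μ)) ∧ γ = 0 := by
  -- lift the section to `T`
  obtain ⟨μ₀, hμ₀⟩ := h.map_surjective ((h.commShiftIso (1:ℤ)).hom.app X ≫ μhat)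
  have key : h.map (μ₀ ≫ ν) = 𝟙 _ := by
    have e : IsIso ((h.commShiftIso (1:ℤ)).hom.app X) := inferInstance
    rw [← cancel_mono ((h.commShiftIso (1:ℤ)).hom.app X)]
    simp only [h.map_comp, hμ₀, assoc, id_comp]
    rw [hμ]
    simp
  have : IsIso (h.map (μ₀ ≫ ν)) := by rw [key]; infer_instance
  have hiso : IsIso (μ₀ ≫ ν) := isIso_of_reflects_iso (μ₀ ≫ ν) h
  set μ : X⟦(1:ℤ)⟧ ⟶ V := inv (μ₀ ≫ ν) ≫ μ₀ with hμdef
  have hμν : μ ≫ ν = 𝟙 _ := by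
    rw [hμdef, assoc, IsIso.inv_comp_eq, comp_id]
  have hγ : γ = 0 := by
    have h31 := comp_distTriang_mor_zero₃₁ _ hT
    simp only [Triangle.mk_mor₃, Triangle.mk_mor₁] at h31
    have : γ⟦(1:ℤ)⟧' = 0 := by
      calc γ⟦(1:ℤ)⟧' = (μ ≫ ν) ≫ γ⟦(1:ℤ)⟧' := by rw [hμν, id_comp]
        _ = μ ≫ (ν ≫ γ⟦(1:ℤ)⟧') := by rw [assoc]
        _ = 0 := by rw [show ν ≫ γ⟦(1:ℤ)⟧' = 0 from h31]; simp
    have := (shiftFunctor T (1:ℤ)).map_injective (by rw [this, Functor.map_zero] : γ⟦(1:ℤ)⟧' = (0 : X ⟶ Z)⟦(1:ℤ)⟧')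
    exact this
  refine ⟨⟨μ, ?_⟩, hγ⟩
  have h23 := comp_distTriang_mor_zero₂₃ _ hT
  simp only [Triangle.mk_mor₂, Triangle.mk_mor₃] at h23
  let φ : binaryBiproductTriangle Z (X⟦(1:ℤ)⟧) ⟶ (Triangle.mk γ ω ν).rotate :=
    { hom₁ := 𝟙 Z
      hom₂ := biprod.desc ω μ
      hom₃ := 𝟙 (X⟦(1:ℤ)⟧)
      comm₁ := by simp [binaryBiproductTriangle, Triangle.mk, Triangle.rotate]
      comm₂ := by
        dsimp [binaryBiproductTriangle, Triangle.mk, Triangle.rotate]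
        ext
        · simp [binaryBiproductTriangle]; exact h23.symm
        · simp [binaryBiproductTriangle, hμν]
      comm₃ := by simp [binaryBiproductTriangle, hγ, Triangle.mk, Triangle.rotate] }
  have := isIso₂_of_isIso₁₃ φ (binaryBiproductTriangle_distinguished Z (X⟦(1:ℤ)⟧))
    (rot_of_distTriang _ hT) (by dsimp [φ]; exact IsIso.id _) (by dsimp [φ]; exact IsIso.id _)
  exact this
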